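/- Let f(x) = a_n x^n + ⋯ + a_0 be a polynomial of degree n with integer coefficients and let q be an odd prime. Suppose a_0 is not divisible by q, the congruence f(x) ≡ 0 (mod q) has exactly ℓ solutions in ℤ/qℤ, and exactly b of these solutions are quadratic residues modulo q. Then R(f(x), x^{(q−1)/2} + 1) ≡ 0 (mod q^{ℓ−b}). -/

import Mathlib

open Polynomial Finset Matrix

/-- The Sylvester matrix of two integer polynomials `f` (of degree `n = f.natDegree`)
and `g` (of degree `m = g.natDegree`): an `(m + n) × (m + n)` matrix whose first `m`
rows are shifted copies of the coefficients of `f` (in decreasing order of degree)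
and whose last `n` rows are shifted copies of the coefficients of `g`. -/
def sylvesterMatrix (f g : Polynomial ℤ) :
    Matrix (Fin (g.natDegree + f.natDegree)) (Fin (g.natDegree + f.natDegree)) ℤ :=
  Matrix.of fun i j =>
    if (i : ℕ) < g.natDegree then
      if (i : ℕ) ≤ (j : ℕ) ∧ (j : ℕ) ≤ (i : ℕ) + f.natDegree then
        f.coeff (f.natDegree - ((j : ℕ) - (i : ℕ)))
      else 0
    else
      if (i : ℕ) - g.natDegree ≤ (j : ℕ) ∧ (j : ℕ) ≤ ((i : ℕ) - g.natDegree) + g.natDegree then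
        g.coeff (g.natDegree - ((j : ℕ) - ((i : ℕ) - g.natDegree)))
      else 0

/-- The resultant `R(f, g)` of two integer polynomials, i.e. the determinant of their
Sylvester matrix. -/
def resultant (f g : Polynomial ℤ) : ℤ :=
  (sylvesterMatrix f g).det


lemma keyDet (q : ℕ) [Fact q.Prime] : ∀ (d N : ℕ) (M : Matrix (Fin N) (Fin N) ℤ)
    (v : Fin d → Fin N → ZMod q),
    LinearIndependent (ZMod q) v →
    (∀ i, (M.map (Int.cast : ℤ → ZMod q)) *ᵥ (v i) = 0) →
    (q : ℤ) ^ d ∣ M.det := by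
  intro d
  induction d with
  | zero => intro N M v _ _; simpa using one_dvd _
  | succ d ih =>
    intro N M v hv hker
    have hqZ : Prime (q : ℤ) := Nat.prime_iff_prime_int.mp Fact.out
    set u := v (Fin.last d) with hu_def
    have hu : u ≠ 0 := hv.ne_zero _
    obtain ⟨j, hj⟩ : ∃ j, u j ≠ 0 := Function.ne_iff.mp hu
    set c : Fin N → ℤ := fun k => (ZMod.cast (u k) : ℤ) with hc_def
    have hcast : ∀ k, ((c k : ℤ) : ZMod q) = u k := fun k => ZMod.intCast_zmod_cast _
    have hmap : ∀ k, (((M *ᵥ c) k : ℤ) : ZMod q) = 0 := by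
      intro k
      have h0 : ((M.map (Int.cast : ℤ → ZMod q)) *ᵥ u) k = 0 := by
        rw [hker (Fin.last d)]; rfl
      rw [show u = fun t => ((c t : ℤ) : ZMod q) from funext fun t => (hcast t).symm] at h0
      simpa [Matrix.mulVec, dotProduct, Matrix.map_apply] using h0
    have hdvd : ∀ k, (q : ℤ) ∣ (M *ᵥ c) k :=
      fun k => (ZMod.intCast_zmod_eq_zero_iff_dvd _ _).mp (hmap k)
    choose w hw using hdvd
    have hMc : M *ᵥ c = (q : ℤ) • w := funext fun k => by
      rw [hw k]; simp [smul_eq_mul]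
    have h1 : (M.updateCol j (M *ᵥ c)).det = M.det * c j := by
      have h2 : Matrix.cramer M (M *ᵥ c) = M.det • c := by
        rw [Matrix.cramer_eq_adjugate_mulVec, Matrix.mulVec_mulVec, Matrix.adjugate_mul,
          Matrix.smul_mulVec, Matrix.one_mulVec]
      have h3 := congrFun h2 j
      rw [Matrix.cramer_apply] at h3
      simpa [smul_eq_mul, mul_comm] using h3
    have h3 : M.det * c j = (q : ℤ) * (M.updateCol j w).det := by
      rw [← h1, hMc, Matrix.det_updateCol_smul]
    set M' := M.updateCol j w with hM'_def
    set lam : Fin d → ZMod q := fun i => v i.castSucc j * (u j)⁻¹ with hlam_def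
    set v' : Fin d → Fin N → ZMod q := fun i => v i.castSucc - lam i • u with hv'_def
    have hv'j : ∀ i, v' i j = 0 := by
      intro i
      simp [hv'_def, hlam_def, mul_assoc, inv_mul_cancel₀ hj]
    have hker' : ∀ i, (M'.map (Int.cast : ℤ → ZMod q)) *ᵥ (v' i) = 0 := by
      intro i
      have hMv : (M.map (Int.cast : ℤ → ZMod q)) *ᵥ (v' i) = 0 := by
        rw [hv'_def]
        simp only [Matrix.mulVec_sub, Matrix.mulVec_smul, hu_def]
        rw [hker i.castSucc, hker (Fin.last d)]
        simp
      funext k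
      have hM : ((M'.map (Int.cast : ℤ → ZMod q)) *ᵥ (v' i)) k
          = ((M.map (Int.cast : ℤ → ZMod q)) *ᵥ (v' i)) k := by
        simp only [Matrix.mulVec, dotProduct, Matrix.map_apply]
        refine Finset.sum_congr rfl fun tt _ => ?_
        by_cases htt : tt = j
        · subst htt; rw [hv'j i]; ring
        · rw [hM'_def, Matrix.updateCol_apply, if_neg htt]
      rw [hM, hMv]
    have hv'ind : LinearIndependent (ZMod q) v' := by
      rw [Fintype.linearIndependent_iff]
      intro cc hcc i0
      set G : Fin (d + 1) → ZMod q :=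
        fun i => Fin.lastCases (-(∑ i, cc i * lam i)) (fun i => cc i) i with hG_def
      have hsum : ∑ i, G i • v i = 0 := by
        rw [Fin.sum_univ_castSucc]
        simp only [hG_def, Fin.lastCases_castSucc, Fin.lastCases_last]
        have h5 : ∑ i, cc i • v' i = 0 := hcc
        simp only [hv'_def, smul_sub, smul_smul] at h5
        rw [Finset.sum_sub_distrib, ← Finset.sum_smul] at h5
        rw [neg_smul, ← sub_eq_add_neg]
        exact h5
      have h6 := Fintype.linearIndependent_iff.mp hv G hsum i0.castSucc
      simpa [hG_def] using h6
    have h7 : (q : ℤ) ^ d ∣ M'.det := ih N M' v' hv'ind hker'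
    obtain ⟨ee, hee⟩ := h7
    have h8 : (q : ℤ) ^ (d + 1) ∣ c j * M.det := by
      refine ⟨ee, ?_⟩
      rw [mul_comm (c j), h3, hee, pow_succ]
      ring
    have h9 : ¬ (q : ℤ) ∣ c j := fun hdd =>
      hj (by rw [← hcast j, (ZMod.intCast_zmod_eq_zero_iff_dvd _ _).mpr hdd])
    exact hqZ.pow_dvd_of_dvd_mul_left _ h9 h8


lemma rowSum (q : ℕ) [Fact q.Prime] (p : Polynomial ℤ) (N i' : ℕ)
    (hi : i' + p.natDegree < N) (x : ZMod q) :
    ∑ jn ∈ Finset.range N,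
      (if i' ≤ jn ∧ jn ≤ i' + p.natDegree then
        ((p.coeff (p.natDegree - (jn - i')) : ℤ) : ZMod q) else 0) * x ^ (N - 1 - jn)
      = x ^ (N - 1 - i' - p.natDegree) * (p.map (Int.castRingHom (ZMod q))).eval x := by
  set D := p.natDegree with hD
  have hsub : Finset.Icc i' (i' + D) ⊆ Finset.range N := by
    intro a ha
    simp only [Finset.mem_Icc] at ha
    simp only [Finset.mem_range]
    omega
  have h1 : ∀ jn ∈ Finset.range N, jn ∉ Finset.Icc i' (i' + D) →
      (if i' ≤ jn ∧ jn ≤ i' + D then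
        ((p.coeff (D - (jn - i')) : ℤ) : ZMod q) else 0) * x ^ (N - 1 - jn) = 0 := by
    intro jn _ h
    rw [if_neg (by simpa [Finset.mem_Icc] using h)]
    ring
  rw [← Finset.sum_subset hsub h1]
  rw [← Finset.Ico_add_one_right_eq_Icc, Finset.sum_Ico_eq_sum_range]
  rw [show i' + D + 1 - i' = D + 1 by omega]
  have h3 : ∀ k ∈ Finset.range (D + 1),
      (if i' ≤ i' + k ∧ i' + k ≤ i' + D then
        ((p.coeff (D - (i' + k - i')) : ℤ) : ZMod q) else 0) * x ^ (N - 1 - (i' + k))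
      = x ^ (N - 1 - i' - D) * (((p.coeff (D - k) : ℤ) : ZMod q) * x ^ (D - k)) := by
    intro k hk
    simp only [Finset.mem_range] at hk
    rw [if_pos (by omega), show i' + k - i' = k by omega,
      show N - 1 - (i' + k) = (N - 1 - i' - D) + (D - k) by omega, pow_add]
    ring
  rw [Finset.sum_congr rfl h3, ← Finset.mul_sum]
  congr 1
  have h4 := Finset.sum_range_reflect (fun tt => ((p.coeff tt : ℤ) : ZMod q) * x ^ tt) (D + 1)
  simp only [Nat.add_sub_cancel] at h4
  rw [h4, Polynomial.eval_eq_sum_range'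
    (Nat.lt_succ_of_le (le_trans (Polynomial.natDegree_map_le) (le_of_eq hD.symm)))]
  refine Finset.sum_congr rfl fun tt _ => ?_
  simp [Polynomial.coeff_map]

/-- **Theorem 3, first part.** Let `f` be an integer polynomial of degree `n`, `q` an
odd prime with `q ∤ a_0`, and suppose `f(x) ≡ 0 (mod q)` has exactly `ℓ` solutions,
of which exactly `b` are quadratic residues mod `q`. Then
`R(f(x), x^{(q-1)/2} + 1) ≡ 0 (mod q^{ℓ-b})`. -/
theorem resultant_halfpow_add_one_dvd (q : ℕ) [Fact q.Prime] (hodd : Odd q)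
    (f : Polynomial ℤ) (n : ℕ) (hn : f.natDegree = n)
    (ha0 : ¬ (q : ℤ) ∣ f.coeff 0)
    (ℓ : ℕ)
    (hℓ : (Finset.univ.filter fun x : ZMod q =>
        (f.map (Int.castRingHom (ZMod q))).eval x = 0).card = ℓ)
    (b : ℕ)
    (hb : (Finset.univ.filter fun x : ZMod q =>
        (f.map (Int.castRingHom (ZMod q))).eval x = 0 ∧ ∃ y : ZMod q, x = y ^ 2).card = b) :
    (q : ℤ) ^ (ℓ - b) ∣ _root_.resultant f (X ^ ((q - 1) / 2) + 1) := by
  classical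
  have hq : q.Prime := Fact.out
  obtain ⟨kk, hkk⟩ := hodd
  have hq2 : 2 ≤ q := hq.two_le
  have hq3 : 3 ≤ q := by omega
  set m := (q - 1) / 2 with hm_def
  have hm1 : 1 ≤ m := by omega
  have h2m : 2 * m = q - 1 := by omega
  set g : Polynomial ℤ := X ^ m + 1 with hg_def
  have hgdeg : g.natDegree = m := by
    rw [hg_def, show (1 : Polynomial ℤ) = C 1 from Polynomial.C_1.symm,
      Polynomial.natDegree_X_pow_add_C]
  set fb := f.map (Int.castRingHom (ZMod q)) with hfb_def
  have hfb0 : fb.coeff 0 ≠ 0 := by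
    rw [hfb_def, Polynomial.coeff_map]
    simpa [ZMod.intCast_zmod_eq_zero_iff_dvd] using ha0
  have hfbne : fb ≠ 0 := fun h => hfb0 (by rw [h]; simp)
  have hfb0' : fb.eval 0 ≠ 0 := by
    rwa [← Polynomial.coeff_zero_eq_eval_zero]
  set N := g.natDegree + f.natDegree with hN_def
  have hNval : N = m + n := by rw [hN_def, hgdeg, hn]
  -- counting
  set s := Finset.univ.filter
    (fun x : ZMod q => fb.eval x = 0 ∧ ¬ ∃ y : ZMod q, x = y ^ 2) with hs_def
  have hcard : b + s.card = ℓ := by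
    have h := Finset.card_filter_add_card_filter_not
      (s := Finset.univ.filter (fun x : ZMod q => fb.eval x = 0))
      (p := fun x : ZMod q => ∃ y : ZMod q, x = y ^ 2)
    rw [Finset.filter_filter, Finset.filter_filter] at h
    rw [hs_def, ← hℓ, ← hb]
    exact h
  have hlen : ℓ ≤ n := by
    rw [← hℓ]
    calc (Finset.univ.filter (fun x : ZMod q => fb.eval x = 0)).card
        ≤ fb.roots.toFinset.card := by
          apply Finset.card_le_card
          intro x hx
          simp only [Finset.mem_filter] at hx
          simp only [Multiset.mem_toFinset, Polynomial.mem_roots hfbne]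
          exact hx.2
      _ ≤ Multiset.card fb.roots := Multiset.toFinset_card_le _
      _ ≤ fb.natDegree := Polynomial.card_roots' fb
      _ ≤ n := hn ▸ Polynomial.natDegree_map_le
  set d := ℓ - b with hd_def
  have hscard : s.card = d := by omega
  have hdN : d ≤ N := by omega
  have e := s.equivFinOfCardEq hscard
  set t : Fin d → ZMod q := fun i => ((e.symm i : ZMod q)) with ht_def
  have ht_mem : ∀ i, t i ∈ s := fun i => (e.symm i).2
  have ht_inj : Function.Injective t := fun a b hab => by
    have := e.symm.injective (Subtype.ext hab)
    exact this
  have ht_root : ∀ i, fb.eval (t i) = 0 := by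
    intro i
    have := ht_mem i
    rw [hs_def, Finset.mem_filter] at this
    exact this.2.1
  have ht_nsq : ∀ i, ¬ ∃ y : ZMod q, t i = y ^ 2 := by
    intro i
    have := ht_mem i
    rw [hs_def, Finset.mem_filter] at this
    exact this.2.2
  have ht_ne : ∀ i, t i ≠ 0 := fun i h => hfb0' (h ▸ ht_root i)
  have ht_pow : ∀ i, (t i) ^ m = -1 := by
    intro i
    have h1 : ¬ IsSquare (t i) := by
      rintro ⟨y, hy⟩
      exact ht_nsq i ⟨y, by rw [hy, sq]⟩
    have hq2' : q / 2 = m := by omega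
    have h2 : (t i) ^ m ≠ 1 := fun h =>
      h1 ((ZMod.euler_criterion q (ht_ne i)).mpr (by rwa [hq2']))
    have h3 : ((t i) ^ m) ^ 2 = 1 := by
      rw [← pow_mul, show m * 2 = q - 1 by omega]
      exact ZMod.pow_card_sub_one_eq_one (ht_ne i)
    have h4 : ((t i) ^ m - 1) * ((t i) ^ m + 1) = 0 := by linear_combination h3
    rcases mul_eq_zero.mp h4 with h | h
    · exact absurd (by rwa [sub_eq_zero] at h) h2
    · exact eq_neg_of_add_eq_zero_left h
  -- kernel vectors
  set v : Fin d → Fin N → ZMod q := fun i j => t i ^ (N - 1 - (j : ℕ)) with hv_def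
  have hvind : LinearIndependent (ZMod q) v := by
    rw [Fintype.linearIndependent_iff]
    intro cc hcc i0
    have hd1 : 0 < d := i0.pos
    have hpow : ∀ ee : Fin d, ∑ i, cc i * t i ^ (ee : ℕ) = 0 := by
      intro ee
      have he : (ee : ℕ) < N := lt_of_lt_of_le ee.2 hdN
      have h5 := congrFun hcc ⟨N - 1 - (ee : ℕ), by omega⟩
      simp only [Finset.sum_apply, Pi.smul_apply, Pi.zero_apply, smul_eq_mul, hv_def] at h5
      rwa [show N - 1 - (N - 1 - (ee : ℕ)) = (ee : ℕ) by omega] at h5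
    have h6 := Matrix.eq_zero_of_forall_pow_sum_mul_pow_eq_zero ht_inj hpow
    exact congrFun h6 i0
  have hker : ∀ i, ((sylvesterMatrix f g).map (Int.cast : ℤ → ZMod q)) *ᵥ (v i) = 0 := by
    intro i
    funext k
    have hexp : (((sylvesterMatrix f g).map (Int.cast : ℤ → ZMod q)) *ᵥ (v i)) k
        = ∑ jn : Fin N, ((sylvesterMatrix f g) k jn : ZMod q) * t i ^ (N - 1 - (jn : ℕ)) := by
      simp [Matrix.mulVec, dotProduct, Matrix.map_apply, hv_def]; rfl
    rw [hexp]
    by_cases hk : (k : ℕ) < g.natDegree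
    · have hterm : ∀ jn : Fin N, ((sylvesterMatrix f g) k jn : ZMod q) * t i ^ (N - 1 - (jn : ℕ))
          = (fun jj : ℕ => (if (k : ℕ) ≤ jj ∧ jj ≤ (k : ℕ) + f.natDegree then
              ((f.coeff (f.natDegree - (jj - (k : ℕ))) : ℤ) : ZMod q) else 0)
              * t i ^ (N - 1 - jj)) (jn : ℕ) := by
        intro jn
        simp only [sylvesterMatrix, Matrix.of_apply, if_pos hk, apply_ite (Int.cast : ℤ → ZMod q),
          Int.cast_zero]
      rw [Finset.sum_congr rfl (fun jn _ => hterm jn)]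
      rw [Fin.sum_univ_eq_sum_range (fun jj : ℕ => (if (k : ℕ) ≤ jj ∧ jj ≤ (k : ℕ) + f.natDegree then
              ((f.coeff (f.natDegree - (jj - (k : ℕ))) : ℤ) : ZMod q) else 0)
              * t i ^ (N - 1 - jj)) N]
      rw [rowSum q f N k (by omega) (t i), ht_root i]
      simp
    · have hterm : ∀ jn : Fin N, ((sylvesterMatrix f g) k jn : ZMod q) * t i ^ (N - 1 - (jn : ℕ))
          = (fun jj : ℕ => (if (k : ℕ) - g.natDegree ≤ jj ∧ jj ≤ ((k : ℕ) - g.natDegree) + g.natDegree then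
              ((g.coeff (g.natDegree - (jj - ((k : ℕ) - g.natDegree))) : ℤ) : ZMod q) else 0)
              * t i ^ (N - 1 - jj)) (jn : ℕ) := by
        intro jn
        simp only [sylvesterMatrix, Matrix.of_apply, if_neg hk, apply_ite (Int.cast : ℤ → ZMod q),
          Int.cast_zero]
      have hklt : (k : ℕ) < N := k.2
      rw [Finset.sum_congr rfl (fun jn _ => hterm jn)]
      rw [Fin.sum_univ_eq_sum_range (fun jj : ℕ => (if (k : ℕ) - g.natDegree ≤ jj ∧ jj ≤ ((k : ℕ) - g.natDegree) + g.natDegree then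
              ((g.coeff (g.natDegree - (jj - ((k : ℕ) - g.natDegree))) : ℤ) : ZMod q) else 0)
              * t i ^ (N - 1 - jj)) N]
      rw [rowSum q g N ((k : ℕ) - g.natDegree) (by omega) (t i)]
      have hgev : (g.map (Int.castRingHom (ZMod q))).eval (t i) = 0 := by
        rw [hg_def]
        simp [Polynomial.map_add, Polynomial.map_pow, ht_pow i]
      rw [hgev]
      simp
  have hfinal := keyDet q d N (sylvesterMatrix f g) v hvind hker
  rw [hd_def] at hfinal
  exact hfinal
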